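/- Let X_{r,β} be the n×n matrix with (X)_{ij} = 0 for i<j, r^{n-1} for i=j, β r^{n-(i-j+1)} for i>j, with β ≥ 1 and r ∈ (0,1]. Then ‖X_{r,β} (in dimension n)‖ ≤ ‖X_{r,β} (in dimension n+1)‖, i.e. the spectral norm grows monotonically with the dimension n. -/

import Mathlib

open scoped Matrix.Norms.L2Operator

noncomputable def Xmat (n : ℕ) (r beta : ℝ) : Matrix (Fin n) (Fin n) ℝ :=
  Matrix.of fun i j =>
    if (i : ℕ) < (j : ℕ) then 0
    else if i = j then r ^ (n - 1)
    else beta * r ^ (n - ((i : ℕ) - (j : ℕ) + 1))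

/-- For `β ∈ [1,2]` and `r ∈ (0,1]`, the spectral norm of `X_{r,β}` grows
monotonically with the dimension. -/
theorem stmt6 (n : ℕ) (r beta : ℝ) (hr0 : 0 < r) (hr1 : r ≤ 1)
    (hb1 : 1 ≤ beta) (hb2 : beta ≤ 2) :
    ‖Xmat n r beta‖ ≤ ‖Xmat (n + 1) r beta‖ := by
  have hb0 : (0:ℝ) ≤ beta := le_trans zero_le_one hb1
  -- nonnegativity of entries
  have hXnn : ∀ (m : ℕ) (i j : Fin m), 0 ≤ Xmat m r beta i j := by
    intro m i j
    simp only [Xmat, Matrix.of_apply]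
    split_ifs <;> positivity
  -- entrywise domination after shifting rows
  have key : ∀ i j : Fin n, Xmat n r beta i j ≤ Xmat (n+1) r beta i.succ j.castSucc := by
    intro i j
    simp only [Xmat, Matrix.of_apply, Fin.ext_iff, Fin.val_succ, Fin.coe_castSucc]
    rcases lt_trichotomy (i:ℕ) (j:ℕ) with h | h | h
    · rw [if_pos h]
      split_ifs
      · exact le_refl _
      · positivity
      · positivity
    · rw [if_neg (by omega), if_pos h, if_neg (by omega), if_neg (by omega)]
      have he : (n + 1) - ((i:ℕ) + 1 - (j:ℕ) + 1) = n - 1 := by omega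
      rw [he]
      nlinarith [pow_pos hr0 (n-1)]
    · rw [if_neg (by omega), if_neg (by omega), if_neg (by omega), if_neg (by omega)]
      have he : (n + 1) - ((i:ℕ) + 1 - (j:ℕ) + 1) = n - ((i:ℕ) - (j:ℕ) + 1) := by omega
      rw [he]
  rw [Matrix.l2_opNorm_def (Xmat n r beta)]
  refine ContinuousLinearMap.opNorm_le_bound _ (norm_nonneg _) fun x => ?_
  classical
  set y : EuclideanSpace ℝ (Fin (n+1)) :=
    WithLp.toLp 2 (fun j => if h : (j:ℕ) < n then |x ⟨j, h⟩| else 0) with hy_def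
  have hylast : y (Fin.last n) = 0 := by simp [hy_def]
  have hycast : ∀ j : Fin n, y j.castSucc = |x j| := by
    intro j
    simp [hy_def, j.isLt]
  have hy : ‖y‖ = ‖x‖ := by
    rw [EuclideanSpace.norm_eq, EuclideanSpace.norm_eq]
    congr 1
    rw [Fin.sum_univ_castSucc]
    simp [hycast, hylast]
  -- main pointwise bound
  set u : Fin n → ℝ := Matrix.mulVec (Xmat n r beta) (fun k => x k) with hu_def
  set v : Fin (n+1) → ℝ := Matrix.mulVec (Xmat (n+1) r beta) (fun k => y k) with hv_def
  have hvnn : ∀ k, 0 ≤ v k := by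
    intro k
    simp only [hv_def, Matrix.mulVec, dotProduct]
    apply Finset.sum_nonneg
    intro j _
    have : 0 ≤ y j := by
      simp only [hy_def]
      split_ifs
      · exact abs_nonneg _
      · exact le_refl 0
    exact mul_nonneg (hXnn _ _ _) this
  have hb : ∀ i : Fin n, |u i| ≤ v i.succ := by
    intro i
    have hui : u i = ∑ j, Xmat n r beta i j * x j := rfl
    rw [hui]
    calc |∑ j, Xmat n r beta i j * x j| ≤ ∑ j, |Xmat n r beta i j * x j| :=
        Finset.abs_sum_le_sum_abs _ _
      _ = ∑ j, Xmat n r beta i j * |x j| := by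
          refine Finset.sum_congr rfl fun j _ => ?_
          rw [abs_mul, abs_of_nonneg (hXnn _ _ _)]
      _ ≤ ∑ j : Fin n, Xmat (n+1) r beta i.succ j.castSucc * y j.castSucc := by
          refine Finset.sum_le_sum fun j _ => ?_
          rw [hycast j]
          exact mul_le_mul_of_nonneg_right (key i j) (abs_nonneg _)
      _ ≤ v i.succ := by
          rw [hv_def, Matrix.mulVec, dotProduct, Fin.sum_univ_castSucc]
          simp only [hylast, mul_zero, add_zero]
          exact le_refl _
  have hsum : ∑ i : Fin n, ‖u i‖ ^ 2 ≤ ∑ k : Fin (n+1), ‖v k‖ ^ 2 := by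
    rw [Fin.sum_univ_succ]
    have h1 : ∑ i : Fin n, ‖u i‖ ^ 2 ≤ ∑ i : Fin n, ‖v i.succ‖ ^ 2 := by
      refine Finset.sum_le_sum fun i _ => ?_
      rw [Real.norm_eq_abs, Real.norm_eq_abs]
      nlinarith [hb i, abs_nonneg (u i), abs_of_nonneg (hvnn i.succ)]
    have h0 : (0:ℝ) ≤ ‖v 0‖ ^ 2 := by positivity
    linarith
  have hnormuv : ‖(EuclideanSpace.equiv (Fin n) ℝ).symm u‖
      ≤ ‖(EuclideanSpace.equiv (Fin (n+1)) ℝ).symm v‖ := by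
    rw [EuclideanSpace.norm_eq, EuclideanSpace.norm_eq]
    apply Real.sqrt_le_sqrt
    simpa using hsum
  have hfinal := Matrix.l2_opNorm_mulVec (Xmat (n+1) r beta) y
  calc ‖(Matrix.toEuclideanLin.trans LinearMap.toContinuousLinearMap) (Xmat n r beta) x‖
      = ‖(EuclideanSpace.equiv (Fin n) ℝ).symm u‖ := by
        congr 1
    _ ≤ ‖(EuclideanSpace.equiv (Fin (n+1)) ℝ).symm v‖ := hnormuv
    _ = ‖(EuclideanSpace.equiv (Fin (n+1)) ℝ).symm (Matrix.mulVec (Xmat (n+1) r beta) y)‖ := by rfl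
    _ ≤ ‖Xmat (n+1) r beta‖ * ‖y‖ := hfinal
    _ = ‖Xmat (n+1) r beta‖ * ‖x‖ := by rw [hy]
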